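/- Let n ≥ 2 be an integer and let g(x) = (-1)^{n+1} ψ₂⁽ⁿ⁾(x), which is completely monotonic on (0,∞). Fix m > 0 and an odd integer r ≥ 1. Then for all x₁, x₂ ∈ (0,m) with x₁ + x₂ ≤ m, g^{(r)}(x₁) + g^{(r)}(x₂) ≤ g^{(r)}(x₁ + x₂). -/

import Mathlib

noncomputable def psi2 (n : ℕ) (x : ℝ) : ℝ :=
  (-1) ^ (n + 1) * (n.factorial : ℝ) * ∑' k : ℕ, (1 + (k : ℝ)) / (x + k) ^ (n + 1)

noncomputable def auxF (p : ℕ) (x : ℝ) : ℝ := ∑' k : ℕ, (1 + (k : ℝ)) / (x + k) ^ p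

lemma aux_summable (p : ℕ) (hp : 3 ≤ p) (x : ℝ) (hx : 0 < x) :
    Summable (fun k : ℕ => (1 + (k : ℝ)) / (x + k) ^ p) := by
  have hc : (0:ℝ) < min x 1 := lt_min hx one_pos
  have hs : Summable (fun k : ℕ => (min x 1 ^ p)⁻¹ * (((k : ℝ) + 1) ^ 2)⁻¹) := by
    apply Summable.mul_left
    have h := (Real.summable_one_div_nat_pow (p := 2)).2 one_lt_two
    have := (summable_nat_add_iff 1).2 h
    simpa [one_div] using this
  apply Summable.of_nonneg_of_le ?_ ?_ hs
  · intro k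
    have hxk : (0:ℝ) < x + k := by positivity
    positivity
  · intro k
    have hxk : (0:ℝ) < x + k := by positivity
    have h1 : min x 1 * (1 + (k:ℝ)) ≤ x + k := by
      have h2 : min x 1 ≤ x := min_le_left _ _
      have h3 : min x 1 ≤ 1 := min_le_right _ _
      nlinarith [Nat.cast_nonneg (α := ℝ) k]
    have h4 : (min x 1 * (1 + (k:ℝ))) ^ p ≤ (x + k) ^ p :=
      pow_le_pow_left₀ (by positivity) h1 p
    have h5 : (1 + (k:ℝ)) / (x + k) ^ p ≤ (1 + (k:ℝ)) / (min x 1 * (1 + (k:ℝ))) ^ p :=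
      div_le_div_of_nonneg_left (by positivity) (by positivity) h4
    refine h5.trans ?_
    rw [mul_pow]
    have h6 : (1 + (k:ℝ)) * ((k:ℝ) + 1) ^ 2 ≤ (1 + (k:ℝ)) ^ p := by
      have h7 : (1 + (k:ℝ)) ^ 3 ≤ (1 + (k:ℝ)) ^ p :=
        pow_le_pow_right₀ (by linarith [Nat.cast_nonneg (α := ℝ) k]) hp
      nlinarith [Nat.cast_nonneg (α := ℝ) k]
    have hk1 : (0:ℝ) < 1 + (k:ℝ) := by positivity
    have hcp : (0:ℝ) < min x 1 ^ p := by positivity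
    rw [← mul_inv, ← one_div, div_le_div_iff₀ (by positivity) (by positivity)]
    nlinarith [mul_le_mul_of_nonneg_left h6 hcp.le]
  
lemma aux_hasDerivAt (p : ℕ) (hp : 3 ≤ p) (x : ℝ) (hx : 0 < x) :
    HasDerivAt (auxF p) (-(p : ℝ) * auxF (p + 1) x) x := by
  have key : HasDerivAt (fun z => ∑' k : ℕ, (1 + (k : ℝ)) / (z + k) ^ p)
      (∑' k : ℕ, -(p : ℝ) * ((1 + (k : ℝ)) / (x + k) ^ (p + 1))) x := by
    apply hasDerivAt_tsum_of_isPreconnected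
      (g := fun (k : ℕ) (z : ℝ) => (1 + (k : ℝ)) / (z + k) ^ p)
      (g' := fun (k : ℕ) (z : ℝ) => -(p : ℝ) * ((1 + (k : ℝ)) / (z + k) ^ (p + 1)))
      (u := fun k : ℕ => (p : ℝ) * ((1 + (k : ℝ)) / (x / 2 + k) ^ (p + 1)))
      (t := Set.Ioi (x / 2)) (y₀ := x)
    · exact ((aux_summable (p+1) (by omega) (x/2) (by linarith))).mul_left _
    · exact isOpen_Ioi
    · exact isPreconnected_Ioi
    · intro k y hy
      have hyk : (0:ℝ) < y + k := by
        have : x / 2 < y := hy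
        have : (0:ℝ) ≤ (k:ℝ) := Nat.cast_nonneg k
        linarith
      have h1 : HasDerivAt (fun z : ℝ => (z + (k:ℝ)) ^ p)
          ((p : ℝ) * (y + k) ^ (p - 1) * 1) y :=
        ((hasDerivAt_id y).add_const _).pow p
      have h2 := (h1.inv (by positivity)).const_mul (1 + (k:ℝ))
      have heq : (fun z : ℝ => (1 + (k:ℝ)) / (z + (k:ℝ)) ^ p)
          = fun z : ℝ => (1 + (k:ℝ)) * (((z + (k:ℝ)) ^ p)⁻¹) := by
        funext z; rw [div_eq_mul_inv]
      rw [heq]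
      refine h2.congr_deriv ?_
      rw [mul_one]
      field_simp
      have hpow : (y + (k:ℝ)) ^ (p - 1) * (y + (k:ℝ)) ^ (p + 1) = ((y + (k:ℝ)) ^ p) ^ 2 := by
        rw [← pow_add, ← pow_mul]
        congr 1
        omega
      rw [hpow]
    · intro k y hy
      have hy2 : (0:ℝ) < x / 2 := by linarith
      have hyk : (0:ℝ) < y + k := by
        have : x / 2 < y := hy
        have : (0:ℝ) ≤ (k:ℝ) := Nat.cast_nonneg k
        linarith
      have h2k : (0:ℝ) < x / 2 + k := by positivity
      have ht : (0:ℝ) ≤ (1 + (k:ℝ)) / (y + k) ^ (p + 1) := by positivity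
      rw [Real.norm_eq_abs, abs_mul, abs_neg, abs_of_nonneg (Nat.cast_nonneg p),
        abs_of_nonneg ht]
      have hle : x / 2 + (k:ℝ) ≤ y + k := by
        have := Set.mem_Ioi.1 hy; linarith
      gcongr
    · exact Set.mem_Ioi.2 (by linarith)
    · exact aux_summable p hp x hx
    · exact Set.mem_Ioi.2 (by linarith)
  have : (∑' k : ℕ, -(p : ℝ) * ((1 + (k : ℝ)) / (x + k) ^ (p + 1)))
      = -(p : ℝ) * auxF (p + 1) x := by
    rw [tsum_mul_left]; rfl
  rw [this] at key
  exact key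

lemma aux_nonneg (p : ℕ) (x : ℝ) (hx : 0 < x) : 0 ≤ auxF p x := by
  apply tsum_nonneg
  intro k
  have hxk : (0:ℝ) < x + k := by positivity
  positivity

lemma aux_anti (p : ℕ) (hp : 3 ≤ p) (x y : ℝ) (hx : 0 < x) (hxy : x ≤ y) :
    auxF p y ≤ auxF p x := by
  apply Summable.tsum_le_tsum _ (aux_summable p hp y (lt_of_lt_of_le hx hxy)) (aux_summable p hp x hx)
  intro k
  have hxk : (0:ℝ) < x + k := by positivity
  exact div_le_div_of_nonneg_left (by positivity) (pow_pos hxk p)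
    (pow_le_pow_left₀ hxk.le (by linarith) p)

lemma aux_iteratedDeriv (n : ℕ) (hn : 2 ≤ n) (j : ℕ) :
    ∀ x ∈ Set.Ioi (0:ℝ), iteratedDeriv j (fun y => (n.factorial : ℝ) * auxF (n + 1) y) x
      = (-1) ^ j * ((n + j).factorial : ℝ) * auxF (n + 1 + j) x := by
  induction j with
  | zero => intro x hx; simp [iteratedDeriv_zero]
  | succ j ih =>
    intro x hx
    rw [iteratedDeriv_succ]
    have hev : iteratedDeriv j (fun y => (n.factorial : ℝ) * auxF (n + 1) y)
        =ᶠ[nhds x] fun y => (-1) ^ j * ((n + j).factorial : ℝ) * auxF (n + 1 + j) y := by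
      filter_upwards [isOpen_Ioi.mem_nhds hx] with y hy
      exact ih y hy
    rw [hev.deriv_eq]
    have hd := (aux_hasDerivAt (n + 1 + j) (by omega) x hx).const_mul
      ((-1 : ℝ) ^ j * ((n + j).factorial : ℝ))
    rw [hd.deriv]
    have : ((n + (j+1)).factorial : ℝ) = ((n + 1 + j : ℕ) : ℝ) * ((n + j).factorial : ℝ) := by
      have : n + (j + 1) = (n + j) + 1 := by omega
      rw [this, Nat.factorial_succ]
      push_cast
      ring_nf
    rw [this]
    have harg : n + 1 + j + 1 = n + 1 + (j + 1) := by omega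
    rw [harg]
    ring

theorem stmt_18 (n : ℕ) (hn : 2 ≤ n) (m : ℝ) (hm : 0 < m) (r : ℕ) (hr : Odd r)
    (x₁ x₂ : ℝ) (hx₁ : x₁ ∈ Set.Ioo 0 m) (hx₂ : x₂ ∈ Set.Ioo 0 m) (hsum : x₁ + x₂ ≤ m) :
    iteratedDeriv r (fun y => (-1) ^ (n + 1) * psi2 n y) x₁ +
      iteratedDeriv r (fun y => (-1) ^ (n + 1) * psi2 n y) x₂ ≤
      iteratedDeriv r (fun y => (-1) ^ (n + 1) * psi2 n y) (x₁ + x₂) := by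
  have hfun : (fun y => (-1 : ℝ) ^ (n + 1) * psi2 n y)
      = fun y => (n.factorial : ℝ) * auxF (n + 1) y := by
    funext y
    unfold psi2 auxF
    rw [← mul_assoc, ← mul_assoc, ← pow_add]
    have : Even ((n + 1) + (n + 1)) := by exact Even.add_self _
    rw [this.neg_one_pow, one_mul]
  rw [hfun]
  have h1 : (0:ℝ) < x₁ := hx₁.1
  have h2 : (0:ℝ) < x₂ := hx₂.1
  have h12 : (0:ℝ) < x₁ + x₂ := by linarith
  rw [aux_iteratedDeriv n hn r x₁ h1, aux_iteratedDeriv n hn r x₂ h2,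
    aux_iteratedDeriv n hn r (x₁ + x₂) h12]
  rw [hr.neg_one_pow]
  have hK : (0:ℝ) < ((n + r).factorial : ℝ) := by positivity
  have hmono : auxF (n + 1 + r) (x₁ + x₂) ≤ auxF (n + 1 + r) x₁ :=
    aux_anti _ (by omega) x₁ (x₁ + x₂) h1 (by linarith)
  have hnn : 0 ≤ auxF (n + 1 + r) x₂ := aux_nonneg _ _ h2
  nlinarith
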